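/- Let H be a real inner product space, c : H → H a linear map, X_h a finite-dimensional subspace of H, Y_h ⊆ X_h a subspace, and 𝒱_h = {(v, ψ) ∈ Y_h × X_h : ⟨c v, c μ⟩ = ⟨ψ, μ⟩ for all μ ∈ X_h}. Suppose u, φ ∈ H satisfy ⟨φ, w⟩ = ⟨c u, c w⟩ for all w ∈ X_h, and suppose α > 0 satisfies the inverse inequality ‖c w‖ ≤ α‖w‖ for all w ∈ X_h. Then for every (v_h, ψ_h) ∈ 𝒱_h and every μ_h ∈ X_h, ‖φ − ψ_h‖ ≤ 2‖φ − μ_h‖ + α‖c(u − v_h)‖. -/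

import Mathlib

open scoped RealInnerProductSpace

/-- Membership in the discrete constrained space `𝒱_h` for the mixed quad-curl method. -/
def inVh {H : Type*} [NormedAddCommGroup H] [InnerProductSpace ℝ H]
    (c : H →ₗ[ℝ] H) (Xh Yh : Submodule ℝ H) (v ψ : H) : Prop :=
  v ∈ Yh ∧ ψ ∈ Xh ∧ ∀ μ ∈ Xh, ⟪c v, c μ⟫ = ⟪ψ, μ⟫

/-- Key intermediate inequality in the second error estimate for the mixed method,
using the inverse inequality `‖c w‖ ≤ α‖w‖` on `X_h`:
`‖φ − ψ_h‖ ≤ 2‖φ − μ_h‖ + α‖c(u − v_h)‖`. -/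
theorem stmt10 {H : Type*} [NormedAddCommGroup H] [InnerProductSpace ℝ H]
    (c : H →ₗ[ℝ] H) (Xh Yh : Submodule ℝ H) [FiniteDimensional ℝ Xh]
    (hYX : Yh ≤ Xh)
    (u φ : H)
    (hrel : ∀ w ∈ Xh, ⟪φ, w⟫ = ⟪c u, c w⟫)
    (α : ℝ) (hα : 0 < α)
    (hinv : ∀ w ∈ Xh, ‖c w‖ ≤ α * ‖w‖) :
    ∀ vh ψh : H, inVh c Xh Yh vh ψh → ∀ μh ∈ Xh,
      ‖φ - ψh‖ ≤ 2 * ‖φ - μh‖ + α * ‖c (u - vh)‖ := by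
  rintro vh ψh ⟨hv, hψ, horth⟩ μh hμ
  set e := ψh - μh with he
  have heX : e ∈ Xh := Xh.sub_mem hψ hμ
  -- key: ⟪ψh - φ, e⟫ = ⟪c (vh - u), c e⟫
  have key : ⟪ψh - φ, e⟫ = ⟪c (vh - u), c e⟫ := by
    have h1 := horth e heX
    have h2 := hrel e heX
    simp only [map_sub, inner_sub_left] at *
    linarith
  have hnorm : ‖e‖ * ‖e‖ ≤ (‖c (u - vh)‖ * α + ‖φ - μh‖) * ‖e‖ := by
    have : ‖e‖ * ‖e‖ = ⟪ψh - φ, e⟫ + ⟪φ - μh, e⟫ := by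
      rw [← real_inner_self_eq_norm_mul_norm, ← inner_add_left]
      congr 1
      rw [he]; abel
    rw [this, key]
    have hce : ‖c (vh - u)‖ = ‖c (u - vh)‖ := by
      rw [← norm_neg, ← map_neg]; congr 1; abel
    calc ⟪c (vh - u), c e⟫ + ⟪φ - μh, e⟫
        ≤ ‖c (vh - u)‖ * ‖c e‖ + ‖φ - μh‖ * ‖e‖ := by
          gcongr <;> exact real_inner_le_norm _ _
      _ ≤ ‖c (u - vh)‖ * (α * ‖e‖) + ‖φ - μh‖ * ‖e‖ := by
          rw [hce]; gcongr; exact hinv e heX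
      _ = (‖c (u - vh)‖ * α + ‖φ - μh‖) * ‖e‖ := by ring
  have hebound : ‖e‖ ≤ ‖c (u - vh)‖ * α + ‖φ - μh‖ := by
    rcases eq_or_lt_of_le (norm_nonneg e) with h0 | h0
    · rw [← h0]
      positivity
    · exact le_of_mul_le_mul_right hnorm h0
  calc ‖φ - ψh‖ ≤ ‖φ - μh‖ + ‖μh - ψh‖ := by
        have : φ - ψh = (φ - μh) + (μh - ψh) := by abel
        rw [this]; exact norm_add_le _ _
    _ = ‖φ - μh‖ + ‖e‖ := by rw [← norm_neg (μh - ψh)]; congr 1; simp [he]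
    _ ≤ ‖φ - μh‖ + (‖c (u - vh)‖ * α + ‖φ - μh‖) := by linarith
    _ = 2 * ‖φ - μh‖ + α * ‖c (u - vh)‖ := by ring
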